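/- Fix p ∈ [1,∞] and consider the two-agent system h : ℝ^{2k} → ℝ^{2k}, h(x₁,x₂) = (sgn_p(x₂ − x₁), sgn_p(x₁ − x₂)). For every x = (x₁,x₂) with x₁ = x₂, every element ν = (ν₁,ν₂) of the Filippov set-valued map F[h](x) satisfies ν₁ = −ν₂. -/

import Mathlib

open MeasureTheory Set
open scoped ENNReal

noncomputable def eBall {ι : Type*} [Fintype ι] (x : ι → ℝ) (δ : ℝ) : Set (ι → ℝ) :=
  {y | Real.sqrt (∑ i, (y i - x i) ^ 2) < δ}

noncomputable def filippov {ι κ : Type*} [Fintype ι] [Fintype κ]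
    (h : (ι → ℝ) → (κ → ℝ)) (x : ι → ℝ) : Set (κ → ℝ) :=
  ⋂ (δ : ℝ) (_ : 0 < δ) (S : Set (ι → ℝ)) (_ : volume S = 0),
    closure (convexHull ℝ (h '' (eBall x δ \ S)))

noncomputable def lpNorm (p : ℝ≥0∞) {k : ℕ} (x : Fin k → ℝ) : ℝ :=
  if p = ∞ then ⨆ l, |x l| else (∑ l, |x l| ^ p.toReal) ^ (1 / p.toReal)

noncomputable def dpSign (p : ℝ≥0∞) {k : ℕ} (w : Fin k → ℝ) : Fin k → ℝ :=
  if w = 0 then 0 else (lpNorm p w)⁻¹ • w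

lemma lpNorm_neg (p : ℝ≥0∞) {k : ℕ} (w : Fin k → ℝ) : lpNorm p (-w) = lpNorm p w := by
  unfold _root_.lpNorm
  simp [Pi.neg_apply, abs_neg]

lemma dpSign_neg (p : ℝ≥0∞) {k : ℕ} (w : Fin k → ℝ) :
    dpSign p (-w) = -dpSign p w := by
  unfold dpSign
  by_cases hw : w = 0
  · simp [hw]
  · have h' : -w ≠ 0 := by simpa using neg_ne_zero.mpr hw
    simp [hw, h', lpNorm_neg, smul_neg]

/-- **Antisymmetry of the Filippov set on the diagonal for the two-agent system.**
For the two-agent system `h(x₁, x₂) = (sgn_p(x₂ - x₁), sgn_p(x₁ - x₂))` and any point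
with `x₁ = x₂`, every element `ν = (ν₁, ν₂)` of `F[h](x)` satisfies `ν₁ = -ν₂`. -/
theorem filippov_two_agent_antisymmetric {k : ℕ} (p : ℝ≥0∞) (hp : 1 ≤ p) :
    let h : (Fin 2 × Fin k → ℝ) → (Fin 2 × Fin k → ℝ) :=
      fun x il =>
        if il.1 = 0 then dpSign p (fun l => x (1, l) - x (0, l)) il.2
        else dpSign p (fun l => x (0, l) - x (1, l)) il.2
    ∀ x : Fin 2 × Fin k → ℝ, (∀ l : Fin k, x (0, l) = x (1, l)) →
      ∀ ν ∈ filippov h x, ∀ l : Fin k, ν (0, l) = -ν (1, l) := by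
  intro h x _ ν hν l
  -- The target closed convex set
  set A : Set (Fin 2 × Fin k → ℝ) := {w | ∀ l : Fin k, w (0, l) + w (1, l) = 0} with hA
  have hconv : Convex ℝ A := by
    intro u hu v hv a b ha hb hab
    intro l
    have h1 := hu l
    have h2 := hv l
    simp only [Pi.add_apply, Pi.smul_apply, smul_eq_mul]
    nlinarith [h1, h2]
  have hclosed : IsClosed A := by
    have : A = ⋂ l : Fin k, {w : Fin 2 × Fin k → ℝ | w (0, l) + w (1, l) = 0} := by
      ext w; simp [hA, Set.mem_iInter]
    rw [this]
    exact isClosed_iInter fun l =>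
      isClosed_eq ((continuous_apply ((0 : Fin 2), l)).add (continuous_apply ((1 : Fin 2), l))) continuous_const
  -- the image of h lies in A
  have himg : ∀ s : Set (Fin 2 × Fin k → ℝ), h '' s ⊆ A := by
    rintro s _ ⟨y, -, rfl⟩ l
    have h0 : h y (0, l) = dpSign p (fun l => y (1, l) - y (0, l)) l := by
      simp [h]
    have h1 : h y (1, l) = dpSign p (fun l => y (0, l) - y (1, l)) l := by
      simp [h]
    have hneg : (fun l => y (0, l) - y (1, l)) = -(fun l => y (1, l) - y (0, l)) := by
      funext m; simp [Pi.neg_apply]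
    rw [h0, h1, hneg, dpSign_neg]
    simp
  -- extract one member of the Filippov intersection
  have hmem : ν ∈ closure (convexHull ℝ (h '' (eBall x 1 \ (∅ : Set (Fin 2 × Fin k → ℝ))))) := by
    have := Set.mem_iInter.mp hν 1
    have := Set.mem_iInter.mp this one_pos
    have := Set.mem_iInter.mp this (∅ : Set (Fin 2 × Fin k → ℝ))
    exact Set.mem_iInter.mp this (by simp)
  have hsub : closure (convexHull ℝ (h '' (eBall x 1 \ (∅ : Set (Fin 2 × Fin k → ℝ))))) ⊆ A :=
    closure_minimal (convexHull_min (himg _) hconv) hclosed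
  have := hsub hmem l
  linarith
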